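/- Lower bound relating lattice distance to smooth pairs, with equality condition: let n ≥ 1, let p₁ < ⋯ < pₙ be the first n primes, let c > 0 be real and N ≥ 2 an integer. Define b_i = √(ln p_i)·e_i + N^c (ln p_i)·e_{n+1} ∈ ℝ^{n+1} for 1 ≤ i ≤ n, and t = N^c (ln N)·e_{n+1}. For any e ∈ ℤ^n let b = Σ_{i=1}^n e_i b_i, u = ∏_{i : e_i > 0} p_i^{e_i} and v = ∏_{i : e_i < 0} p_i^{−e_i}. Then ‖b − t‖² ≥ ln(u v) + N^{2c} · |ln(u/(vN))|², and equality holds if and only if e_i ∈ {−1, 0, 1} for every i. -/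

import Mathlib

/-- The basis vectors of the prime lattice in `ℝ^(n+1)`:
`b_i = √(ln p_i)·e_i + N^c (ln p_i)·e_{n+1}` for `1 ≤ i ≤ n`, where `p_i` is the
`i`-th prime (`p₁ = 2` corresponds to index `0`). -/
noncomputable def primeBasis (N n : ℕ) (c : ℝ) : Fin n → Fin (n + 1) → ℝ := fun i j =>
  (if (j : ℕ) = (i : ℕ) then Real.sqrt (Real.log (Nat.nth Nat.Prime i)) else 0) +
  (if (j : ℕ) = n then (N : ℝ) ^ c * Real.log (Nat.nth Nat.Prime i) else 0)

/-- The target vector `t = N^c (ln N)·e_{n+1} ∈ ℝ^(n+1)`. -/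
noncomputable def targetVec (N n : ℕ) (c : ℝ) : Fin (n + 1) → ℝ := fun j =>
  if (j : ℕ) = n then (N : ℝ) ^ c * Real.log N else 0

private lemma int_abs_le_sq (m : ℤ) : |m| ≤ m ^ 2 := by
  rcases eq_or_ne m 0 with h | h
  · simp [h]
  · have h1 : 1 ≤ |m| := Int.one_le_abs h
    calc |m| = 1 * |m| := by ring
    _ ≤ |m| * |m| := mul_le_mul_of_nonneg_right h1 (abs_nonneg m)
    _ = m ^ 2 := by rw [← sq_abs]; ring

private lemma int_abs_eq_sq_iff (m : ℤ) : |m| = m ^ 2 ↔ m = -1 ∨ m = 0 ∨ m = 1 := by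
  constructor
  · intro h
    have h2 : |m| * (|m| - 1) = 0 := by
      have : m ^ 2 = |m| * |m| := by rw [← sq_abs]; ring
      rw [this] at h; nlinarith
    rcases mul_eq_zero.1 h2 with h3 | h3
    · right; left; exact abs_eq_zero.1 h3
    · have h4 : |m| = 1 := by omega
      rcases (abs_eq (by norm_num : (0:ℤ) ≤ 1)).1 h4 with h5 | h5
      · right; right; exact h5
      · left; exact h5
  · rintro (h | h | h) <;> simp [h]

/-- Lower bound relating lattice distance to smooth pairs, with equality
condition: for `b = ∑ eᵢ bᵢ`, `u = ∏_{eᵢ>0} pᵢ^{eᵢ}` and `v = ∏_{eᵢ<0} pᵢ^{-eᵢ}`,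
`‖b − t‖² ≥ ln(uv) + N^{2c} |ln(u/(vN))|²`, with equality iff every `eᵢ ∈ {−1,0,1}`. -/
theorem prime_lattice_distance_lower_bound
    (n : ℕ) (hn : 1 ≤ n) (c : ℝ) (hc : 0 < c) (N : ℕ) (hN : 2 ≤ N)
    (e : Fin n → ℤ) (u v : ℕ)
    (hu : u = ∏ i ∈ Finset.univ.filter fun i => 0 < e i,
        Nat.nth Nat.Prime i ^ (e i).toNat)
    (hv : v = ∏ i ∈ Finset.univ.filter fun i => e i < 0,
        Nat.nth Nat.Prime i ^ (-e i).toNat) :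
    (Real.log (u * v : ℕ) +
        (N : ℝ) ^ (2 * c) * |Real.log u - Real.log v - Real.log N| ^ 2 ≤
      ∑ j, ((∑ i, (e i : ℝ) • primeBasis N n c i) j - targetVec N n c j) ^ 2) ∧
    ((∑ j, ((∑ i, (e i : ℝ) • primeBasis N n c i) j - targetVec N n c j) ^ 2 =
        Real.log (u * v : ℕ) +
          (N : ℝ) ^ (2 * c) * |Real.log u - Real.log v - Real.log N| ^ 2) ↔
      ∀ i, e i = -1 ∨ e i = 0 ∨ e i = 1) := by
  set L : Fin n → ℝ := fun i => Real.log (Nat.nth Nat.Prime (i : ℕ)) with hL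
  have hLpos : ∀ i, 0 < L i := fun i =>
    Real.log_pos (by exact_mod_cast (Nat.prime_nth_prime i).one_lt)
  have hpne : ∀ i : Fin n, ((Nat.nth Nat.Prime (i : ℕ) : ℝ)) ^ (0:ℕ) ≠ 0 := by
    intro i; norm_num
  -- log u as a sum
  have hlogu : Real.log u = ∑ i, (if 0 < e i then ((e i).toNat : ℝ) else 0) * L i := by
    rw [hu]
    push_cast [Nat.cast_prod, Nat.cast_pow]
    rw [Real.log_prod (fun i _ =>
      pow_ne_zero _ (by exact_mod_cast (Nat.prime_nth_prime (i:ℕ)).pos.ne'))]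
    rw [Finset.sum_filter]
    refine Finset.sum_congr rfl fun i _ => ?_
    split <;> simp [Real.log_pow, hL]
  have hlogv : Real.log v = ∑ i, (if e i < 0 then ((-e i).toNat : ℝ) else 0) * L i := by
    rw [hv]
    push_cast [Nat.cast_prod, Nat.cast_pow]
    rw [Real.log_prod (fun i _ =>
      pow_ne_zero _ (by exact_mod_cast (Nat.prime_nth_prime (i:ℕ)).pos.ne'))]
    rw [Finset.sum_filter]
    refine Finset.sum_congr rfl fun i _ => ?_
    split <;> simp [Real.log_pow, hL]
  have habs : Real.log u + Real.log v = ∑ i, |(e i : ℝ)| * L i := by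
    rw [hlogu, hlogv, ← Finset.sum_add_distrib]
    refine Finset.sum_congr rfl fun i _ => ?_
    rcases lt_trichotomy (e i) 0 with h | h | h
    · have h2 : (((-e i).toNat : ℕ) : ℝ) = -(e i : ℝ) := by
        have := Int.toNat_of_nonneg (show (0:ℤ) ≤ -e i by omega); exact_mod_cast this
      rw [if_neg (by omega), if_pos h, h2, abs_of_neg (by exact_mod_cast h)]
      ring
    · simp [h]
    · have h2 : (((e i).toNat : ℕ) : ℝ) = (e i : ℝ) := by
        have := Int.toNat_of_nonneg h.le; exact_mod_cast this
      rw [if_pos h, if_neg (by omega), h2, abs_of_pos (by exact_mod_cast h)]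
      ring
  have hdiff : Real.log u - Real.log v = ∑ i, (e i : ℝ) * L i := by
    rw [hlogu, hlogv, ← Finset.sum_sub_distrib]
    refine Finset.sum_congr rfl fun i _ => ?_
    rcases lt_trichotomy (e i) 0 with h | h | h
    · have h2 : (((-e i).toNat : ℕ) : ℝ) = -(e i : ℝ) := by
        have := Int.toNat_of_nonneg (show (0:ℤ) ≤ -e i by omega); exact_mod_cast this
      rw [if_neg (by omega), if_pos h, h2]
      ring
    · simp [h]
    · have h2 : (((e i).toNat : ℕ) : ℝ) = (e i : ℝ) := by
        have := Int.toNat_of_nonneg h.le; exact_mod_cast this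
      rw [if_pos h, if_neg (by omega), h2]
      ring
  have hupos : 0 < u := by
    rw [hu]; exact Finset.prod_pos fun i _ => pow_pos (Nat.prime_nth_prime _).pos _
  have hvpos : 0 < v := by
    rw [hv]; exact Finset.prod_pos fun i _ => pow_pos (Nat.prime_nth_prime _).pos _
  have hloguv : Real.log (u * v : ℕ) = ∑ i, |(e i : ℝ)| * L i := by
    push_cast
    rw [Real.log_mul (by positivity) (by positivity), habs]
  -- the coordinate sum
  set S : ℝ := ∑ i, (e i : ℝ) * L i with hS
  have hcoord : ∀ j : Fin (n + 1),
      (∑ i, (e i : ℝ) • primeBasis N n c i) j - targetVec N n c j =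
        (if h : (j : ℕ) < n then (e ⟨(j : ℕ), h⟩ : ℝ) * Real.sqrt (L ⟨(j : ℕ), h⟩)
         else (N : ℝ) ^ c * (S - Real.log N)) := by
    intro j
    rw [Finset.sum_apply]
    simp only [Pi.smul_apply, smul_eq_mul]
    by_cases h : (j : ℕ) < n
    · rw [dif_pos h]
      have hjn : (j : ℕ) ≠ n := Nat.ne_of_lt h
      simp only [primeBasis, targetVec, if_neg hjn, add_zero, sub_zero]
      rw [Finset.sum_eq_single (⟨(j : ℕ), h⟩ : Fin n)]
      · rw [if_pos rfl]
      · intro b _ hb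
        rw [if_neg (fun hh => hb (Fin.ext hh.symm)), mul_zero]
      · intro hab; exact absurd (Finset.mem_univ _) hab
    · rw [dif_neg h]
      have hjn : (j : ℕ) = n := by omega
      simp only [primeBasis, targetVec, if_pos hjn]
      have hterm : ∀ i : Fin n, (e i : ℝ) *
          ((if (j : ℕ) = (i : ℕ) then Real.sqrt (Real.log (Nat.nth Nat.Prime (i:ℕ))) else 0) +
            (N : ℝ) ^ c * Real.log (Nat.nth Nat.Prime (i:ℕ))) =
          (N : ℝ) ^ c * ((e i : ℝ) * L i) := by
        intro i
        rw [if_neg (by have := i.isLt; omega), zero_add, hL]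
        ring
      rw [Finset.sum_congr rfl fun i _ => hterm i, ← Finset.mul_sum, ← hS]
      ring
  have hsumsq : ∑ j, ((∑ i, (e i : ℝ) • primeBasis N n c i) j - targetVec N n c j) ^ 2 =
      (∑ i, ((e i : ℝ)) ^ 2 * L i) + ((N : ℝ) ^ c) ^ 2 * (S - Real.log N) ^ 2 := by
    rw [Fin.sum_univ_castSucc]
    congr 1
    · refine Finset.sum_congr rfl fun i _ => ?_
      rw [hcoord]
      rw [dif_pos (show ((i.castSucc : Fin (n+1)) : ℕ) < n by simp)]
      have h2 : (⟨((i.castSucc : Fin (n+1)) : ℕ), by simp⟩ : Fin n) = i := by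
        ext; simp
      rw [h2, mul_pow, Real.sq_sqrt (hLpos i).le]
    · rw [hcoord, dif_neg (by simp)]
      ring
  have hNpow : (N : ℝ) ^ (2 * c) = ((N : ℝ) ^ c) ^ 2 := by
    rw [mul_comm, Real.rpow_mul (by positivity)]
    norm_num
  have hsq : |Real.log u - Real.log v - Real.log N| ^ 2 = (S - Real.log N) ^ 2 := by
    rw [sq_abs, hdiff]
  have hterm : ∀ i : Fin n, |(e i : ℝ)| * L i ≤ (e i : ℝ) ^ 2 * L i := by
    intro i
    have h1 : |(e i : ℝ)| ≤ (e i : ℝ) ^ 2 := by exact_mod_cast int_abs_le_sq (e i)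
    exact mul_le_mul_of_nonneg_right h1 (hLpos i).le
  constructor
  · rw [hsumsq, hloguv, hNpow, hsq]
    exact add_le_add_left (Finset.sum_le_sum fun i _ => hterm i) _
  · rw [hsumsq, hloguv, hNpow, hsq]
    constructor
    · intro h
      have h2 : ∑ i, |(e i : ℝ)| * L i = ∑ i, (e i : ℝ) ^ 2 * L i := by linarith
      have h3 := (Finset.sum_eq_sum_iff_of_le (fun i _ => hterm i)).1 h2
      intro i
      have h5 : |(e i : ℝ)| = (e i : ℝ) ^ 2 :=
        mul_right_cancel₀ (hLpos i).ne' (h3 i (Finset.mem_univ i))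
      exact (int_abs_eq_sq_iff (e i)).1 (by exact_mod_cast h5)
    · intro h
      have h2 : ∑ i, |(e i : ℝ)| * L i = ∑ i, (e i : ℝ) ^ 2 * L i := by
        refine Finset.sum_congr rfl fun i _ => ?_
        have h3 : |(e i : ℝ)| = (e i : ℝ) ^ 2 := by
          exact_mod_cast (int_abs_eq_sq_iff (e i)).2 (h i)
        rw [h3]
      linarith
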